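/- For a prime p > 3 and fixed a ∈ Z_p with a ≠ 0, the magic states |f_{a,b,c}⟩ = p^{-1/2} Σ_{k∈Z_p} ω^{ak³+bk²+ck}|k⟩ satisfy |⟨f_{a,b,c}|f_{a,b',c'}⟩| = 1 if (b,c)=(b',c'), equals 0 if b=b' and c≠c', and equals 1/√p if b ≠ b'. In particular, for each fixed b, {|f_{a,b,c}⟩ : c ∈ Z_p} is an orthonormal basis of C^p, and bases with different b are mutually unbiased. -/

import Mathlib

open Complex Matrix BigOperators Finset
open scoped Kronecker

noncomputable section

/-- Additive character `a ↦ exp(2πi a/p)` on `ZMod p`. -/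
def chi (p : ℕ) (a : ZMod p) : ℂ := Complex.exp (2 * Real.pi * Complex.I * (a.val : ℂ) / p)

/-- The shift operator `X : |j⟩ ↦ |j+1⟩`. -/
def Xop (p : ℕ) : Matrix (ZMod p) (ZMod p) ℂ := fun j k => if j = k + 1 then 1 else 0

/-- The clock operator `Z : |j⟩ ↦ ω^j |j⟩`. -/
def Zop (p : ℕ) : Matrix (ZMod p) (ZMod p) ℂ := Matrix.diagonal (fun j => chi p j)

/-- Weyl-Heisenberg displacement operator `D_(x|z) = ω^{2⁻¹ x z} X^x Z^z`. -/
def Dop (p : ℕ) [NeZero p] (x z : ZMod p) : Matrix (ZMod p) (ZMod p) ℂ :=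
  chi p ((2 : ZMod p)⁻¹ * x * z) • (Xop p ^ x.val * Zop p ^ z.val)

/-- The stabilizer MUB vector `|ψ_B^V⟩ = p^{-1/2} Σ_k ω^{2⁻¹ B k² - V k} |k⟩`. -/
def psi (p : ℕ) (B V : ZMod p) : ZMod p → ℂ :=
  fun k => ((Real.sqrt p : ℂ))⁻¹ * chi p ((2 : ZMod p)⁻¹ * B * k ^ 2 - V * k)

/-- The magic state `|f_{a,b,c}⟩ = p^{-1/2} Σ_k ω^{a k³ + b k² + c k} |k⟩`. -/
def magic (p : ℕ) (a b c : ZMod p) : ZMod p → ℂ :=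
  fun k => ((Real.sqrt p : ℂ))⁻¹ * chi p (a * k ^ 3 + b * k ^ 2 + c * k)

/-- Rank-one projector `|v⟩⟨v|`. -/
def proj (p : ℕ) (v : ZMod p → ℂ) : Matrix (ZMod p) (ZMod p) ℂ :=
  fun i j => v i * (starRingEnd ℂ) (v j)

/-- The single-qudit operator `S = Σ_B |ψ_B^{-B(B+2⁻¹)}⟩⟨ψ_B^{-B(B+2⁻¹)}|`. -/
def Sop (p : ℕ) [NeZero p] : Matrix (ZMod p) (ZMod p) ℂ :=
  ∑ B : ZMod p, proj p (psi p B (-B * (B + (2 : ZMod p)⁻¹)))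

/- ### Auxiliary lemmas -/

section Aux

variable (p : ℕ) [Fact p.Prime]

lemma chi_eq_pow (a : ZMod p) :
    chi p a = Complex.exp (2 * Real.pi * Complex.I / p) ^ a.val := by
  rw [chi, ← Complex.exp_nat_mul]
  congr 1
  ring

lemma zeta_prim : IsPrimitiveRoot (Complex.exp (2 * Real.pi * Complex.I / p)) p :=
  Complex.isPrimitiveRoot_exp p (NeZero.ne p)

lemma chi_add (x y : ZMod p) : chi p (x + y) = chi p x * chi p y := by
  rw [chi_eq_pow, chi_eq_pow, chi_eq_pow, ← pow_add, ZMod.val_add,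
    ← pow_eq_pow_mod _ (zeta_prim p).pow_eq_one]

lemma chi_zero : chi p 0 = 1 := by
  simp [chi]

lemma chi_one_ne_one : chi p 1 ≠ 1 := by
  rw [chi_eq_pow, ZMod.val_one, pow_one]
  exact (zeta_prim p).ne_one (Fact.out (p := p.Prime)).one_lt

lemma abs_chi (a : ZMod p) : ‖chi p a‖ = 1 := by
  have h : 2 * Real.pi * Complex.I * (a.val : ℂ) / p
      = ((2 * Real.pi * a.val / p : ℝ) : ℂ) * Complex.I := by
    push_cast
    ring
  rw [chi, h, Complex.norm_exp_ofReal_mul_I]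

lemma conj_chi (a : ZMod p) : (starRingEnd ℂ) (chi p a) = chi p (-a) := by
  have h1 : chi p a * chi p (-a) = 1 := by
    rw [← chi_add, add_neg_cancel, chi_zero]
  have h2 : chi p a * (starRingEnd ℂ) (chi p a) = 1 := by
    rw [Complex.mul_conj, Complex.normSq_eq_norm_sq, abs_chi, one_pow, Complex.ofReal_one]
  calc (starRingEnd ℂ) (chi p a)
      = (starRingEnd ℂ) (chi p a) * (chi p a * chi p (-a)) := by rw [h1, mul_one]
    _ = (chi p a * (starRingEnd ℂ) (chi p a)) * chi p (-a) := by ring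
    _ = chi p (-a) := by rw [h2, one_mul]

/-- The additive character `k ↦ chi p (d k)` bundled as an `AddChar`. -/
def chiChar (d : ZMod p) : AddChar (ZMod p) ℂ where
  toFun k := chi p (d * k)
  map_zero_eq_one' := by simp [chi_zero]
  map_add_eq_mul' x y := by
    show chi p (d * (x + y)) = chi p (d * x) * chi p (d * y)
    rw [mul_add, chi_add]

lemma sum_chi_mul (d : ZMod p) (hd : d ≠ 0) : ∑ k : ZMod p, chi p (d * k) = 0 := by
  have : ∑ k : ZMod p, chiChar p d k = 0 := by
    rw [AddChar.sum_eq_zero_iff_ne_zero]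
    intro h
    have := AddChar.eq_zero_iff.mp h d⁻¹
    rw [show chiChar p d d⁻¹ = chi p (d * d⁻¹) from rfl, mul_inv_cancel₀ hd] at this
    exact chi_one_ne_one p this
  simpa [chiChar] using this

lemma myTwo_ne_zero (hp3 : 3 < p) : (2 : ZMod p) ≠ 0 := by
  intro h
  have h2 : ((2 : ℕ) : ZMod p) = 0 := by push_cast; exact h
  have hdvd := (ZMod.natCast_eq_zero_iff 2 p).mp h2
  have := Nat.le_of_dvd (by norm_num) hdvd
  omega

/-- The quadratic exponential sum has absolute value `√p`. -/
lemma abs_quad_sum (hp3 : 3 < p) (D E : ZMod p) (hD : D ≠ 0) :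
    ‖∑ k : ZMod p, chi p (D * k ^ 2 + E * k)‖ = Real.sqrt p := by
  set S := ∑ k : ZMod p, chi p (D * k ^ 2 + E * k) with hS
  have key : S * (starRingEnd ℂ) S = (p : ℂ) := by
    rw [hS, map_sum, Finset.sum_mul_sum]
    simp_rw [conj_chi]
    rw [Finset.sum_comm]
    have step1 : ∀ l : ZMod p, ∑ k : ZMod p,
        chi p (D * k ^ 2 + E * k) * chi p (-(D * l ^ 2 + E * l))
        = ∑ m : ZMod p, chi p (D * m ^ 2 + E * m) * chi p (2 * D * l * m) := by
      intro l
      refine (Fintype.sum_equiv (Equiv.addLeft l)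
        (fun m => chi p (D * m ^ 2 + E * m) * chi p (2 * D * l * m))
        (fun k => chi p (D * k ^ 2 + E * k) * chi p (-(D * l ^ 2 + E * l)))
        (fun m => ?_)).symm
      show chi p (D * m ^ 2 + E * m) * chi p (2 * D * l * m)
          = chi p (D * (l + m) ^ 2 + E * (l + m)) * chi p (-(D * l ^ 2 + E * l))
      rw [← chi_add, ← chi_add]
      congr 1
      ring
    simp_rw [step1]
    rw [Finset.sum_comm]
    have step2 : ∀ m : ZMod p, ∑ l : ZMod p,
        chi p (D * m ^ 2 + E * m) * chi p (2 * D * l * m)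
        = if m = 0 then (p : ℂ) else 0 := by
      intro m
      rw [← Finset.mul_sum]
      by_cases hm : m = 0
      · simp [hm, chi_zero, Finset.card_univ]
      · have h2Dm : 2 * D * m ≠ 0 :=
          mul_ne_zero (mul_ne_zero (myTwo_ne_zero p hp3) hD) hm
        have : ∑ l : ZMod p, chi p (2 * D * l * m) = 0 := by
          rw [← sum_chi_mul p (2 * D * m) h2Dm]
          exact Finset.sum_congr rfl fun l _ => by ring_nf
        rw [this, mul_zero, if_neg hm]
    simp_rw [step2]
    simp
  have hnorm : Complex.normSq S = p := by
    have : ((Complex.normSq S : ℝ) : ℂ) = ((p : ℝ) : ℂ) := by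
      rw [← Complex.mul_conj, key]; norm_num
    exact_mod_cast this
  rw [← Real.sqrt_sq (norm_nonneg S), Complex.sq_norm, hnorm]

lemma sqrt_inv_sq : ((Real.sqrt p : ℂ))⁻¹ * ((Real.sqrt p : ℂ))⁻¹ = ((p : ℂ))⁻¹ := by
  rw [← mul_inv]
  congr 1
  rw [← Complex.ofReal_mul, Real.mul_self_sqrt (Nat.cast_nonneg p)]
  norm_num

lemma inner_magic (a b c b' c' : ZMod p) :
    ∑ k : ZMod p, (starRingEnd ℂ) (magic p a b c k) * magic p a b' c' k
      = ((p : ℂ))⁻¹ * ∑ k : ZMod p, chi p ((b' - b) * k ^ 2 + (c' - c) * k) := by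
  rw [Finset.mul_sum]
  refine Finset.sum_congr rfl fun k _ => ?_
  unfold magic
  rw [_root_.map_mul, map_inv₀, Complex.conj_ofReal, conj_chi]
  have : ((Real.sqrt p : ℂ))⁻¹ * chi p (-(a * k ^ 3 + b * k ^ 2 + c * k)) *
      (((Real.sqrt p : ℂ))⁻¹ * chi p (a * k ^ 3 + b' * k ^ 2 + c' * k))
      = (((Real.sqrt p : ℂ))⁻¹ * ((Real.sqrt p : ℂ))⁻¹) *
        (chi p (-(a * k ^ 3 + b * k ^ 2 + c * k)) * chi p (a * k ^ 3 + b' * k ^ 2 + c' * k)) := by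
    ring
  rw [this, sqrt_inv_sq, ← chi_add]
  congr 2
  ring

end Aux

theorem stmt3 (p : ℕ) [Fact p.Prime] (hp3 : 3 < p) (a : ZMod p) (ha : a ≠ 0)
    (b c b' c' : ZMod p) :
    (b = b' → c = c' →
      ‖∑ k : ZMod p, (starRingEnd ℂ) (magic p a b c k) * magic p a b' c' k‖ = 1) ∧
    (b = b' → c ≠ c' →
      ‖∑ k : ZMod p, (starRingEnd ℂ) (magic p a b c k) * magic p a b' c' k‖ = 0) ∧
    (b ≠ b' →
      ‖∑ k : ZMod p, (starRingEnd ℂ) (magic p a b c k) * magic p a b' c' k‖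
        = 1 / Real.sqrt p) := by
  have hp0 : (p : ℝ) > 0 := by positivity
  have hpc : ((p : ℂ)) ≠ 0 := Nat.cast_ne_zero.mpr (NeZero.ne p)
  rw [inner_magic]
  refine ⟨?_, ?_, ?_⟩
  · rintro rfl rfl
    simp only [sub_self, zero_mul, zero_add, chi_zero]
    rw [Finset.sum_const, Finset.card_univ, ZMod.card]
    simp [hpc]
  · rintro rfl hcc
    simp only [sub_self, zero_mul, zero_add]
    rw [sum_chi_mul p (c' - c) (sub_ne_zero.mpr (Ne.symm hcc))]
    simp
  · intro hbb
    rw [norm_mul, abs_quad_sum p hp3 (b' - b) (c' - c) (sub_ne_zero.mpr (Ne.symm hbb))]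
    rw [norm_inv, Complex.norm_natCast]
    rw [eq_div_iff (by positivity)]
    rw [inv_mul_eq_div, div_mul_eq_mul_div, Real.mul_self_sqrt (le_of_lt hp0), div_self (ne_of_gt hp0)]
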